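/- For α = (α_1,...,α_d) ∈ (Z≥0)^d with |α| = h, β real, and k a nonnegative integer, the generalized Jacobi polynomial admits the single-sum expression P^{(α,β)}_{d,k}(x) = (1/C_α) · ((h+1)_k/k!) · ∑_{n=0}^k A_α(n) · ((-k)_n (k+h+β+1)_n / (h+1)_n) · ((1-x)/2)^n / n!, where C_α = h!/(α_1!···α_d!) and A_α(n) = ∑_{n_1+···+n_d=n} C(n;n_1,...,n_d)·C(n+h; n_1+α_1,...,n_d+α_d). -/

import Mathlib

/-- The Pochhammer symbol `(a)_n = a(a+1)⋯(a+n-1)`. -/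
noncomputable def poch (a : ℝ) (n : ℕ) : ℝ := ∏ i ∈ Finset.range n, (a + i)

lemma poch_succ (a : ℝ) (n : ℕ) : poch a (n+1) = poch a n * (a + n) :=
  Finset.prod_range_succ _ _

lemma poch_nat (m n : ℕ) : poch ((m:ℝ)+1) n = ((m+n).factorial : ℝ) / m.factorial := by
  induction n with
  | zero =>
    have : (m.factorial : ℝ) ≠ 0 := Nat.cast_ne_zero.mpr (Nat.factorial_ne_zero m)
    simp [poch, div_self this]
  | succ n ih =>
    rw [poch_succ, ih, show m + (n+1) = (m+n)+1 from rfl, Nat.factorial_succ]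
    have : (m.factorial : ℝ) ≠ 0 := Nat.cast_ne_zero.mpr (Nat.factorial_ne_zero m)
    field_simp
    push_cast
    ring

lemma poch_nat_ne (m n : ℕ) : poch ((m:ℝ)+1) n ≠ 0 := by
  rw [poch_nat]
  positivity

lemma poch_neg_eq_zero {k m : ℕ} (hk : k < m) : poch (-(k:ℝ)) m = 0 := by
  apply Finset.prod_eq_zero (Finset.mem_range.mpr hk)
  simp

lemma multinomial_real {d : ℕ} (f : Fin d → ℕ) :
    (Nat.multinomial Finset.univ f : ℝ) =
      ((∑ j, f j).factorial : ℝ) / ∏ j, ((f j).factorial : ℝ) := by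
  have h := Nat.multinomial_spec (Finset.univ) f
  have h2 : ((∏ j, (f j).factorial : ℕ) : ℝ) ≠ 0 := by
    rw [Nat.cast_ne_zero]
    exact Finset.prod_ne_zero_iff.mpr fun j _ => Nat.factorial_ne_zero _
  field_simp
  rw [← Nat.cast_prod] at *
  rw [mul_comm]
  exact_mod_cast congrArg (Nat.cast : ℕ → ℝ) h

lemma per_p {d : ℕ} (α p : Fin d → ℕ) (n h : ℕ) (hp : ∑ j, p j = n) (hh : ∑ j, α j = h)
    (cK cB y : ℝ) :
    cK * cB / (∏ j, poch ((α j : ℝ)+1) (p j)) * ∏ j, (y ^ p j / ((p j).factorial : ℝ))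
    = (1 / (Nat.multinomial Finset.univ α : ℝ)) *
      ((Nat.multinomial Finset.univ p * Nat.multinomial Finset.univ (fun j => p j + α j) : ℕ) : ℝ) *
      (cK * cB / poch ((h:ℝ)+1) n) * y ^ n / (n.factorial : ℝ) := by
  have e1 : ∏ j, poch ((α j : ℝ)+1) (p j)
      = (∏ j, (((p j + α j).factorial : ℝ))) / ∏ j, (((α j).factorial : ℝ)) := by
    simp_rw [poch_nat, Finset.prod_div_distrib, Nat.add_comm]
  have e2 : ∏ j, (y ^ p j / ((p j).factorial : ℝ)) = y ^ n / ∏ j, (((p j).factorial : ℝ)) := by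
    rw [Finset.prod_div_distrib, Finset.prod_pow_eq_pow_sum, hp]
  have e3 : (Nat.multinomial Finset.univ p : ℝ) = (n.factorial : ℝ) / ∏ j, (((p j).factorial : ℝ)) := by
    rw [multinomial_real, hp]
  have e4 : (Nat.multinomial Finset.univ (fun j => p j + α j) : ℝ)
      = ((n + h).factorial : ℝ) / ∏ j, (((p j + α j).factorial : ℝ)) := by
    rw [multinomial_real, Finset.sum_add_distrib, hp, hh]
  have e5 : (Nat.multinomial Finset.univ α : ℝ) = (h.factorial : ℝ) / ∏ j, (((α j).factorial : ℝ)) := by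
    rw [multinomial_real, hh]
  have e6 : poch ((h:ℝ)+1) n = ((n + h).factorial : ℝ) / (h.factorial : ℝ) := by
    rw [poch_nat, Nat.add_comm]
  have n1 : ∏ j, (((p j).factorial : ℝ)) ≠ 0 :=
    Finset.prod_ne_zero_iff.mpr fun j _ => Nat.cast_ne_zero.mpr (Nat.factorial_ne_zero _)
  have n2 : ∏ j, (((p j + α j).factorial : ℝ)) ≠ 0 :=
    Finset.prod_ne_zero_iff.mpr fun j _ => Nat.cast_ne_zero.mpr (Nat.factorial_ne_zero _)
  have n3 : ∏ j, (((α j).factorial : ℝ)) ≠ 0 :=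
    Finset.prod_ne_zero_iff.mpr fun j _ => Nat.cast_ne_zero.mpr (Nat.factorial_ne_zero _)
  have n4 : ((h.factorial : ℝ)) ≠ 0 := Nat.cast_ne_zero.mpr (Nat.factorial_ne_zero _)
  have n5 : ((n.factorial : ℝ)) ≠ 0 := Nat.cast_ne_zero.mpr (Nat.factorial_ne_zero _)
  have n6 : (((n+h).factorial : ℝ)) ≠ 0 := Nat.cast_ne_zero.mpr (Nat.factorial_ne_zero _)
  rw [e1, e2]
  push_cast
  rw [e3, e4, e5, e6]
  field_simp

/-- The Lauricella hypergeometric function of type C. -/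
noncomputable def lauricellaFC (d : ℕ) (a b : ℝ) (c : Fin d → ℝ) (x : Fin d → ℝ) : ℝ :=
  ∑' p : Fin d → ℕ,
    poch a (∑ j, p j) * poch b (∑ j, p j) / (∏ j, poch (c j) (p j)) *
      ∏ j, x j ^ p j / (p j).factorial

/-- The generalized Jacobi polynomial. -/
noncomputable def genJacobi (d : ℕ) (k : ℕ) (α : Fin d → ℝ) (β x : ℝ) : ℝ :=
  poch ((∑ j, α j) + 1) k / k.factorial *
    lauricellaFC d (-(k : ℝ)) ((k : ℝ) + (∑ j, α j) + β + 1)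
      (fun j => α j + 1) (fun _ => (1 - x) / 2)

/-- `A_α(n) = ∑_{n_1+⋯+n_d=n} C(n;n_1,…,n_d) C(n+h; n_1+α_1,…,n_d+α_d)`. -/
def Acoef (d : ℕ) (α : Fin d → ℕ) (n : ℕ) : ℕ :=
  ∑ p ∈ Finset.Nat.antidiagonalTuple d n,
    Nat.multinomial Finset.univ p * Nat.multinomial Finset.univ (fun j => p j + α j)

/-- For `α ∈ (ℤ≥0)^d` with `|α| = h`, the generalized Jacobi polynomial has the
single-sum expression
`P^{(α,β)}_{d,k}(x) = (1/C_α) ((h+1)_k/k!)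
  ∑_{n=0}^k A_α(n) ((-k)_n (k+h+β+1)_n/(h+1)_n) ((1-x)/2)^n/n!`,
where `C_α = h!/(α₁!⋯α_d!)`. -/
theorem genJacobi_single_sum (d : ℕ) (α : Fin d → ℕ) (h : ℕ) (hh : h = ∑ j, α j)
    (β x : ℝ) (k : ℕ) :
    genJacobi d k (fun j => (α j : ℝ)) β x =
      (1 / (Nat.multinomial Finset.univ α : ℝ)) * (poch ((h : ℝ) + 1) k / k.factorial) *
        ∑ n ∈ Finset.range (k + 1), (Acoef d α n : ℝ) *
          (poch (-(k : ℝ)) n * poch ((k : ℝ) + h + β + 1) n / poch ((h : ℝ) + 1) n) *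
          ((1 - x) / 2) ^ n / n.factorial := by
  classical
  have hsum : (∑ j, ((α j : ℝ))) = (h : ℝ) := by rw [hh]; push_cast; ring
  set y : ℝ := (1 - x) / 2 with hy
  set B : ℝ := (k:ℝ) + h + β + 1 with hB
  set f : (Fin d → ℕ) → ℝ := fun p =>
    poch (-(k:ℝ)) (∑ j, p j) * poch B (∑ j, p j) / (∏ j, poch ((α j:ℝ)+1) (p j)) *
      ∏ j, y ^ p j / ((p j).factorial : ℝ) with hf
  have hL : genJacobi d k (fun j => (α j : ℝ)) β x
      = poch ((h:ℝ)+1) k / k.factorial * ∑' p : Fin d → ℕ, f p := by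
    unfold genJacobi lauricellaFC
    rw [hsum]
  rw [hL]
  set S : Finset (Fin d → ℕ) :=
    (Finset.range (k+1)).biUnion (fun n => Finset.Nat.antidiagonalTuple d n) with hS
  have hsupp : ∀ p : Fin d → ℕ, p ∉ S → f p = 0 := by
    intro p hp
    have hgt : k < ∑ j, p j := by
      by_contra hle
      push_neg at hle
      exact hp (Finset.mem_biUnion.mpr ⟨∑ j, p j, Finset.mem_range.mpr (Nat.lt_succ_of_le hle),
        (Finset.Nat.mem_antidiagonalTuple).mpr rfl⟩)
    simp [hf, poch_neg_eq_zero hgt]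
  rw [tsum_eq_sum hsupp]
  have hdisj : Set.PairwiseDisjoint ↑(Finset.range (k+1))
      (fun n => Finset.Nat.antidiagonalTuple d n) := by
    intro a _ b _ hab
    simp only [Function.onFun]
    rw [Finset.disjoint_left]
    intro p hpa hpb
    rw [Finset.Nat.mem_antidiagonalTuple] at hpa hpb
    exact hab (hpa ▸ hpb)
  rw [hS, Finset.sum_biUnion hdisj]
  rw [Finset.mul_sum, Finset.mul_sum]
  apply Finset.sum_congr rfl
  intro n _
  have key : ∑ p ∈ Finset.Nat.antidiagonalTuple d n, f p
      = (1 / (Nat.multinomial Finset.univ α : ℝ)) *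
        ((Acoef d α n : ℝ) * (poch (-(k:ℝ)) n * poch B n / poch ((h:ℝ)+1) n) * y ^ n
          / (n.factorial : ℝ)) := by
    unfold Acoef
    push_cast
    rw [Finset.sum_mul, Finset.sum_mul, Finset.sum_div, Finset.mul_sum]
    apply Finset.sum_congr rfl
    intro p hp
    have hpn : ∑ j, p j = n := (Finset.Nat.mem_antidiagonalTuple).mp hp
    simp only [hf, hpn]
    rw [per_p α p n h hpn hh.symm (poch (-(k:ℝ)) n) (poch B n) y]
    push_cast
    ring
  rw [key]
  ring
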